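/- Let A be a finite set (of agents). For each j ∈ A let θ_j be a real with 0 < θ_j ≤ 1, N_j a natural number, and K_j a finite set (of arms). For each arm i let Θ_i := ∑_{j ∈ A : i ∈ K_j} θ_j, and let Θ := ∑_{j ∈ A} θ_j. Let α > 2. Then 2·∑_{j∈A} ∑_{l=1}^{N_j} ∑_{i∈K_j} (l·Θ_i/θ_j)·(θ_j/l)^α ≤ (2(α−1)/(α−2))·∑_{j∈A} |K_j|·Θ·θ_j^{α−1}. -/

import Mathlib

open Finset Real

/-- Tangent-line/Bernoulli inequality: for `q > 0` and `l ≥ 1`,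
`q * (l+1)^(-(q+1)) ≤ l^(-q) - (l+1)^(-q)`. -/
private lemma key_ineq {q : ℝ} (hq : 0 < q) {l : ℕ} (hl : 1 ≤ l) :
    q * ((l : ℝ) + 1) ^ (-(q + 1)) ≤ (l : ℝ) ^ (-q) - ((l : ℝ) + 1) ^ (-q) := by
  have hl0 : (0:ℝ) < l := by exact_mod_cast hl
  have hl1 : (1:ℝ) ≤ l := by exact_mod_cast hl
  have hm0 : (0:ℝ) < (l:ℝ) + 1 := by linarith
  -- main inequality: (1 + q/(l+1)) ≤ ((l+1)/l)^q
  have main : 1 + q / ((l:ℝ) + 1) ≤ (((l:ℝ) + 1) / l) ^ q := by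
    rcases le_or_gt 1 q with h1 | h1
    · have hs : (-1 : ℝ) ≤ 1 / (l:ℝ) := by
        have : (0:ℝ) ≤ 1 / (l:ℝ) := by positivity
        linarith
      have hb := one_add_mul_self_le_rpow_one_add hs h1
      have h2 : q / ((l:ℝ) + 1) ≤ q * (1 / (l:ℝ)) := by
        rw [mul_one_div]
        apply div_le_div_of_nonneg_left hq.le hl0
        linarith
      have h3 : (1 : ℝ) + 1 / (l:ℝ) = ((l:ℝ) + 1) / l := by field_simp
      calc 1 + q / ((l:ℝ) + 1) ≤ 1 + q * (1 / (l:ℝ)) := by linarith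
        _ ≤ (1 + 1 / (l:ℝ)) ^ q := hb
        _ = (((l:ℝ) + 1) / l) ^ q := by rw [h3]
    · -- q < 1 : use concavity direction on (1 - 1/(l+1))^q ≤ 1 - q/(l+1)
      have hs : (-1 : ℝ) ≤ -(1 / ((l:ℝ) + 1)) := by
        have : 1 / ((l:ℝ) + 1) ≤ 1 := by
          rw [div_le_one hm0]; linarith
        linarith
      have hb := rpow_one_add_le_one_add_mul_self hs hq.le h1.le
      have h3 : (1 : ℝ) + -(1 / ((l:ℝ) + 1)) = (l:ℝ) / ((l:ℝ) + 1) := by field_simp; ring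
      have hb' : ((l:ℝ) / ((l:ℝ) + 1)) ^ q ≤ 1 - q / ((l:ℝ) + 1) := by
        rw [← h3]
        calc ((1:ℝ) + -(1 / ((l:ℝ) + 1))) ^ q ≤ 1 + q * -(1 / ((l:ℝ) + 1)) := hb
          _ = 1 - q / ((l:ℝ) + 1) := by ring
      have hpos : (0:ℝ) < (l:ℝ) / ((l:ℝ) + 1) := by positivity
      have hqlt : q / ((l:ℝ) + 1) < 1 := by
        rw [div_lt_one hm0]; linarith
      have hrpos : (0:ℝ) < 1 - q / ((l:ℝ) + 1) := by linarith
      have hinv : (((l:ℝ) + 1) / l) ^ q = (((l:ℝ) / ((l:ℝ) + 1)) ^ q)⁻¹ := by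
        rw [show ((l:ℝ) + 1) / l = ((l:ℝ) / ((l:ℝ) + 1))⁻¹ by rw [inv_div],
          Real.inv_rpow hpos.le]
      rw [hinv]
      have hXpos : (0:ℝ) < ((l:ℝ) / ((l:ℝ) + 1)) ^ q := by positivity
      have hmul : ((l:ℝ) / ((l:ℝ) + 1)) ^ q * (1 + q / ((l:ℝ) + 1)) ≤ 1 := by
        nlinarith [sq_nonneg (q / ((l:ℝ) + 1)), hb', hXpos]
      rw [inv_eq_one_div, le_div_iff₀ hXpos]
      nlinarith [hmul]
  -- deduce the goal from `main`
  have e1 : ((l:ℝ) + 1) ^ (-q) * ((((l:ℝ) + 1) / l) ^ q) = (l:ℝ) ^ (-q) := by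
    rw [Real.div_rpow hm0.le hl0.le, Real.rpow_neg hm0.le, Real.rpow_neg hl0.le]
    have h5 : ((l:ℝ) + 1) ^ q ≠ 0 := by positivity
    have h6 : (l:ℝ) ^ q ≠ 0 := by positivity
    field_simp
  have e2 : ((l:ℝ) + 1) ^ (-(q + 1)) = ((l:ℝ) + 1) ^ (-q) * ((l:ℝ) + 1)⁻¹ := by
    have h7 : -(q + 1) = -q + -1 := by ring
    rw [h7, Real.rpow_add hm0, Real.rpow_neg_one]
  have hmq : (0:ℝ) < ((l:ℝ) + 1) ^ (-q) := by positivity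
  rw [e2, ← e1]
  have h8 : q * (((l:ℝ) + 1) ^ (-q) * ((l:ℝ) + 1)⁻¹)
      = ((l:ℝ) + 1) ^ (-q) * (q / ((l:ℝ) + 1)) := by
    rw [div_eq_mul_inv]; ring
  rw [h8]
  have h9 : q / ((l:ℝ) + 1) ≤ (((l:ℝ) + 1) / l) ^ q - 1 := by linarith
  nlinarith [hmq, h9]

/-- Telescoping tail bound: for `p > 1`, `∑_{l=2}^{N} l^{-p} ≤ (1 - N^{-(p-1)})/(p-1)` for `N ≥ 1`. -/
private lemma tail_sum {p : ℝ} (hp : 1 < p) :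
    ∀ N : ℕ, 1 ≤ N → ∑ l ∈ Icc 2 N, (l:ℝ) ^ (-p) ≤ (1 - (N:ℝ) ^ (-(p-1))) / (p - 1) := by
  intro N hN
  induction N, hN using Nat.le_induction with
  | base => simp [Real.one_rpow]
  | succ n hn ih =>
    rw [Finset.sum_Icc_succ_top (by omega)]
    push_cast
    have hkey := key_ineq (q := p - 1) (by linarith) (l := n) hn
    have hpq : (p - 1) + 1 = p := by ring
    rw [hpq] at hkey
    have hp1 : (0:ℝ) < p - 1 := by linarith
    have hstep : ((n:ℝ) + 1) ^ (-p)
        ≤ ((n:ℝ) ^ (-(p-1)) - ((n:ℝ) + 1) ^ (-(p-1))) / (p - 1) := by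
      rw [le_div_iff₀ hp1]
      nlinarith [hkey]
    calc (∑ l ∈ Icc 2 n, (l:ℝ) ^ (-p)) + ((n:ℝ) + 1) ^ (-p)
        ≤ (1 - (n:ℝ) ^ (-(p-1))) / (p - 1)
          + ((n:ℝ) ^ (-(p-1)) - ((n:ℝ) + 1) ^ (-(p-1))) / (p - 1) := add_le_add ih hstep
      _ = (1 - ((n:ℝ) + 1) ^ (-(p-1))) / (p - 1) := by ring

/-- `∑_{l=1}^N l^{-p} ≤ p/(p-1)` for `p > 1`. -/
private lemma sum_pow_le {p : ℝ} (hp : 1 < p) (N : ℕ) :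
    ∑ l ∈ Icc 1 N, (l:ℝ) ^ (-p) ≤ p / (p - 1) := by
  have hp1 : (0:ℝ) < p - 1 := by linarith
  rcases Nat.eq_zero_or_pos N with h0 | h1
  · subst h0; simp; positivity
  · rw [Finset.Icc_eq_cons_Ioc h1, Finset.sum_cons, show Ioc 1 N = Icc 2 N from
      (Finset.Icc_add_one_left_eq_Ioc 1 N).symm]
    have htail : ∑ l ∈ Icc 2 N, (l:ℝ) ^ (-p) ≤ (1 - (N:ℝ) ^ (-(p-1))) / (p - 1) :=
      tail_sum hp N h1
    have hN0 : (0:ℝ) ≤ (N:ℝ) ^ (-(p-1)) := by positivity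
    have h4 : (1 - (N:ℝ) ^ (-(p-1))) / (p - 1) ≤ 1 / (p - 1) := by
      gcongr; linarith
    have h5 : ((1:ℕ):ℝ) ^ (-p) = 1 := by norm_num
    have h6 : (1:ℝ) + 1 / (p - 1) = p / (p - 1) := by field_simp; ring
    rw [h5]
    linarith

theorem type_two_decisions_bound {A I : Type*} [Fintype A] [DecidableEq I]
    (θ : A → ℝ) (hθ0 : ∀ j, 0 < θ j) (hθ1 : ∀ j, θ j ≤ 1)
    (N : A → ℕ) (K : A → Finset I) (α : ℝ) (hα : 2 < α) :
    2 * ∑ j : A, ∑ l ∈ Finset.Icc 1 (N j), ∑ i ∈ K j,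
        ((l : ℝ) * (∑ j' ∈ Finset.univ.filter fun j' => i ∈ K j', θ j') / θ j)
          * (θ j / (l : ℝ)) ^ α
      ≤ (2 * (α - 1) / (α - 2)) * ∑ j : A, ((K j).card : ℝ) * (∑ j' : A, θ j') * θ j ^ (α - 1) := by
  set Θ : ℝ := ∑ j' : A, θ j' with hΘ
  have hΘ0 : 0 ≤ Θ := Finset.sum_nonneg fun j _ => (hθ0 j).le
  have hp : 1 < α - 1 := by linarith
  have hkey : ∀ j : A,
      ∑ l ∈ Finset.Icc 1 (N j), ∑ i ∈ K j,
        ((l : ℝ) * (∑ j' ∈ Finset.univ.filter fun j' => i ∈ K j', θ j') / θ j)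
          * (θ j / (l : ℝ)) ^ α
      ≤ ((α - 1) / (α - 2)) * (((K j).card : ℝ) * Θ * θ j ^ (α - 1)) := by
    intro j
    have hθj := hθ0 j
    -- bound inner sum for each l in Icc 1 (N j)
    have hinner : ∀ l ∈ Finset.Icc 1 (N j),
        ∑ i ∈ K j,
          ((l : ℝ) * (∑ j' ∈ Finset.univ.filter fun j' => i ∈ K j', θ j') / θ j)
            * (θ j / (l : ℝ)) ^ α
        ≤ ((K j).card : ℝ) * Θ * θ j ^ (α - 1) * (l : ℝ) ^ (-(α-1)) := by
      intro l hl
      have hl1 : 1 ≤ l := (Finset.mem_Icc.mp hl).1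
      have hl0 : (0:ℝ) < l := by exact_mod_cast hl1
      have hcoef : (0:ℝ) ≤ (l : ℝ) / θ j * (θ j / (l : ℝ)) ^ α := by positivity
      have hΘi : ∀ i ∈ K j,
          (∑ j' ∈ Finset.univ.filter fun j' => i ∈ K j', θ j') ≤ Θ := by
        intro i _
        apply Finset.sum_le_sum_of_subset_of_nonneg (Finset.filter_subset _ _)
        intro k _ _; exact (hθ0 k).le
      have step1 : ∑ i ∈ K j,
          ((l : ℝ) * (∑ j' ∈ Finset.univ.filter fun j' => i ∈ K j', θ j') / θ j)
            * (θ j / (l : ℝ)) ^ α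
          ≤ ∑ i ∈ K j, ((l : ℝ) * Θ / θ j) * (θ j / (l : ℝ)) ^ α := by
        apply Finset.sum_le_sum
        intro i hi
        have hΘi' := hΘi i hi
        have h0 : (0:ℝ) ≤ (θ j / (l : ℝ)) ^ α := by positivity
        have h1 : (l : ℝ) * (∑ j' ∈ Finset.univ.filter fun j' => i ∈ K j', θ j') / θ j
            ≤ (l : ℝ) * Θ / θ j := by
          gcongr
        exact mul_le_mul_of_nonneg_right h1 h0
      have heq : ((l : ℝ) * Θ / θ j) * (θ j / (l : ℝ)) ^ α
          = Θ * θ j ^ (α - 1) * (l : ℝ) ^ (-(α-1)) := by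
        rw [Real.div_rpow hθj.le hl0.le, Real.rpow_sub hθj, Real.rpow_one,
          show -(α-1) = 1 - α by ring, Real.rpow_sub hl0, Real.rpow_one]
        have hθα : (0:ℝ) < θ j ^ α := Real.rpow_pos_of_pos hθj α
        have hlα : (0:ℝ) < (l:ℝ) ^ α := Real.rpow_pos_of_pos hl0 α
        field_simp
      refine step1.trans ?_
      rw [heq, Finset.sum_const, nsmul_eq_mul]
      exact le_of_eq (by ring)
    calc ∑ l ∈ Finset.Icc 1 (N j), ∑ i ∈ K j,
          ((l : ℝ) * (∑ j' ∈ Finset.univ.filter fun j' => i ∈ K j', θ j') / θ j)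
            * (θ j / (l : ℝ)) ^ α
        ≤ ∑ l ∈ Finset.Icc 1 (N j),
            ((K j).card : ℝ) * Θ * θ j ^ (α - 1) * (l : ℝ) ^ (-(α-1)) :=
          Finset.sum_le_sum hinner
      _ = ((K j).card : ℝ) * Θ * θ j ^ (α - 1)
            * ∑ l ∈ Finset.Icc 1 (N j), (l : ℝ) ^ (-(α-1)) := by
          exact (Finset.mul_sum _ _ _).symm
      _ ≤ ((K j).card : ℝ) * Θ * θ j ^ (α - 1) * ((α - 1) / ((α - 1) - 1)) := by
          apply mul_le_mul_of_nonneg_left (sum_pow_le hp (N j))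
          exact mul_nonneg (mul_nonneg (Nat.cast_nonneg _) hΘ0)
            (Real.rpow_pos_of_pos hθj _).le
      _ = ((α - 1) / (α - 2)) * (((K j).card : ℝ) * Θ * θ j ^ (α - 1)) := by
          ring_nf
  have hsum := Finset.sum_le_sum (fun j (_ : j ∈ Finset.univ) => hkey j)
  calc 2 * ∑ j : A, ∑ l ∈ Finset.Icc 1 (N j), ∑ i ∈ K j,
        ((l : ℝ) * (∑ j' ∈ Finset.univ.filter fun j' => i ∈ K j', θ j') / θ j)
          * (θ j / (l : ℝ)) ^ α
      ≤ 2 * ∑ j : A, ((α - 1) / (α - 2)) * (((K j).card : ℝ) * Θ * θ j ^ (α - 1)) := by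
        linarith
    _ = (2 * (α - 1) / (α - 2)) * ∑ j : A, ((K j).card : ℝ) * Θ * θ j ^ (α - 1) := by
        rw [← Finset.mul_sum]; ring
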